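/- arXiv:2106.04309 — 4 statements merged into one kernel-verified Lean document; each statement's English description precedes it below -/
import Mathlib

section
/- Let q ∈ {3,7,11,19,43,67,163} and let p ≡ 1 (mod 4) be a prime with (-q/p) = 1. Then there exist positive integers u, v with p = u² - q v². -/
open Zsqrtd

open Zsqrtd

/-- An element of `ℤ√d` whose norm is (up to sign) a rational prime is prime. -/
theorem prime_of_norm_natAbs_prime {d : ℤ} {s : ℕ} (hs : s.Prime) {β : ℤ√d}
    (hβ : β.norm.natAbs = s) : Prime β := by
  have hsp : Prime (s : ℤ) := Nat.prime_iff_prime_int.mp hs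
  have hN : β.norm = s ∨ β.norm = -s := Int.natAbs_eq_iff.mp hβ
  have hdn : (s : ℤ) ∣ β.norm := by rcases hN with h | h <;> simp [h]
  have hnd : β.norm ∣ (s : ℤ) := by rcases hN with h | h <;> simp [h]
  have hS0 : β.norm ≠ 0 := by
    rcases hN with h | h <;> rw [h] <;> simpa using hs.ne_zero
  -- s does not divide β.im
  have him : ¬ (s : ℤ) ∣ β.im := by
    intro h
    have h2 : (s : ℤ) ∣ β.re * β.re := by
      have he : β.re * β.re = β.norm + d * β.im * (β.im) := by rw [norm_def]; ring
      rw [he]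
      exact dvd_add hdn ((h.mul_left (d * β.im)))
    have h3 : (s : ℤ) ∣ β.re := hsp.dvd_of_dvd_pow (n := 2) (by rwa [sq])
    have h4 : (s : ℤ) * s ∣ β.norm := by
      rw [norm_def]
      exact dvd_sub (mul_dvd_mul h3 h3) (mul_dvd_mul (h.mul_left d) h)
    have h5 : s * s ∣ s := by
      have := Int.natAbs_dvd_natAbs.mpr (h4.trans hnd)
      simpa [Int.natAbs_mul] using this
    have h6 := Nat.le_of_dvd hs.pos h5
    nlinarith [hs.two_le]
  -- the linear functional detecting divisibility by β
  set E : ℤ√d → ℤ := fun γ => β.im * γ.re - β.re * γ.im with hE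
  have key : ∀ γ : ℤ√d, β ∣ γ ↔ (s : ℤ) ∣ E γ := by
    intro γ
    constructor
    · rintro ⟨μ, rfl⟩
      have : E (β * μ) = -β.norm * μ.im := by
        simp only [hE, re_mul, im_mul, norm_def]; ring
      rw [this, neg_mul]
      exact ((hdn.mul_right μ.im).neg_right)
    · intro h
      have h1 : (s : ℤ) ∣ β.im * (β.re * γ.re - d * β.im * γ.im) := by
        have he : β.im * (β.re * γ.re - d * β.im * γ.im)
            = β.re * E γ + β.norm * γ.im := by
          simp only [hE, norm_def]; ring
        rw [he]
        exact dvd_add (h.mul_left β.re) (hdn.mul_right γ.im)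
      have hR : (s : ℤ) ∣ β.re * γ.re - d * β.im * γ.im :=
        (hsp.dvd_or_dvd h1).resolve_left him
      have hR' : β.norm ∣ β.re * γ.re - d * β.im * γ.im := hnd.trans hR
      have hE' : β.norm ∣ β.re * γ.im - β.im * γ.re := by
        refine hnd.trans ?_
        have : β.re * γ.im - β.im * γ.re = -E γ := by simp only [hE]; ring
        rw [this]; exact h.neg_right
      obtain ⟨A, hA⟩ := hR'
      obtain ⟨B, hB⟩ := hE'
      refine ⟨⟨A, B⟩, ?_⟩
      have hre : γ.re = β.re * A + d * β.im * B := by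
        apply mul_left_cancel₀ hS0
        rw [norm_def] at hA hB ⊢
        linear_combination β.re * hA + d * β.im * hB
      have him2 : γ.im = β.re * B + β.im * A := by
        apply mul_left_cancel₀ hS0
        rw [norm_def] at hA hB ⊢
        linear_combination β.im * hA + β.re * hB
      have : β * ⟨A, B⟩ = ⟨β.re * A + d * β.im * B, β.re * B + β.im * A⟩ := by
        ext <;> simp only [re_mul, im_mul] <;> ring
      rw [this, ← hre, ← him2]
  constructor
  · intro h0
    rw [h0] at hβ
    simp [norm_def] at hβ
    exact hs.ne_zero hβ.symm
  constructor
  · intro hu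
    obtain ⟨μ, hμ⟩ := hu.exists_right_inv
    have h1 : β.norm * μ.norm = 1 := by rw [← Zsqrtd.norm_mul, hμ, Zsqrtd.norm_one]
    have := congrArg Int.natAbs h1
    rw [Int.natAbs_mul, hβ] at this
    simp at this
    exact hs.one_lt.ne' this.1
  · intro a b hab
    rw [key a, key b]
    rw [key (a * b)] at hab
    have hid : E a * E b = β.im * E (a * b) + β.norm * (a.im * b.im) := by
      simp only [hE, re_mul, im_mul, norm_def]; ring
    have : (s : ℤ) ∣ E a * E b := by
      rw [hid]
      exact dvd_add (hab.mul_left β.im) (hdn.mul_right _)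
    exact hsp.dvd_or_dvd this

/-- Peel off prime factors of `m` from `α`, leaving a divisor of norm `±t`. -/
theorem peel {d : ℤ} (m : ℕ) : ∀ (t : ℕ) (α : ℤ√d), 0 < m → α.norm.natAbs = t * m →
    (∀ s : ℕ, s.Prime → s ∣ m → ∃ β : ℤ√d, β.norm.natAbs = s) →
    ∃ γ : ℤ√d, γ ∣ α ∧ γ.norm.natAbs = t := by
  induction m using Nat.strong_induction_on with
  | _ m ih =>
    intro t α hm hα htab
    rcases eq_or_ne m 1 with rfl | h1
    · exact ⟨α, dvd_refl α, by simpa using hα⟩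
    · set s := m.minFac with hsdef
      have hsp : s.Prime := Nat.minFac_prime h1
      have hsm : s ∣ m := Nat.minFac_dvd m
      obtain ⟨β, hβ⟩ := htab s hsp hsm
      have hβp : Prime β := prime_of_norm_natAbs_prime hsp hβ
      -- β divides α * star α
      have h2 : (s : ℤ) ∣ α.norm := by
        have h0 : s ∣ α.norm.natAbs := hα ▸ hsm.mul_left t
        exact Int.dvd_natAbs.mp (Int.natCast_dvd_natCast.mpr h0)
      have h3 : β ∣ ((α.norm : ℤ) : ℤ√d) := by
        have hb : β ∣ ((β.norm : ℤ) : ℤ√d) := ⟨star β, norm_eq_mul_conj β⟩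
        have hb2 : (β.norm : ℤ) ∣ (s : ℤ) := by
          rcases Int.natAbs_eq_iff.mp hβ with h | h <;> simp [h]
        exact hb.trans ((Zsqrtd.intCast_dvd_intCast _ _).mpr (hb2.trans h2))
      rw [norm_eq_mul_conj] at h3
      have h4 : β ∣ α ∨ star β ∣ α := by
        rcases hβp.dvd_or_dvd h3 with h | h
        · exact Or.inl h
        · right
          obtain ⟨μ, hμ⟩ := h
          exact ⟨star μ, by rw [← star_star α, hμ, star_mul, mul_comm]⟩
      obtain ⟨δ, hδ, hδn⟩ : ∃ δ : ℤ√d, δ ∣ α ∧ δ.norm.natAbs = s := by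
        rcases h4 with h | h
        · exact ⟨β, h, hβ⟩
        · exact ⟨star β, h, by rwa [norm_conj]⟩
      obtain ⟨α₂, rfl⟩ := hδ
      have hn2 : α₂.norm.natAbs = t * (m / s) := by
        have := congrArg Int.natAbs (Zsqrtd.norm_mul δ α₂)
        rw [Int.natAbs_mul, hδn, hα] at this
        have hms : s * (m / s) = m := Nat.mul_div_cancel' hsm
        have : s * α₂.norm.natAbs = s * (t * (m / s)) := by
          rw [← this]; conv_lhs => rw [← hms]
          ring
        exact Nat.eq_of_mul_eq_mul_left hsp.pos this
      have hlt : m / s < m := Nat.div_lt_self hm hsp.one_lt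
      have hpos : 0 < m / s := Nat.div_pos (Nat.minFac_le hm) hsp.pos
      obtain ⟨γ, hγd, hγn⟩ := ih (m / s) hlt t α₂ hpos hn2
        (fun s' hs' hd => htab s' hs' (hd.trans (Nat.div_dvd_of_dvd hsm)))
      exact ⟨γ, hγd.trans (dvd_mul_left α₂ δ), hγn⟩

/-- Descent: for every prime `r` such that `Q` is a square mod `r`,
there is an element of `ℤ√Q` of norm `±r`. -/
theorem reach (Q : ℕ) (hQlt : Q < 169) (hQns : ∀ x : ℤ, x * x ≠ (Q : ℤ))
    (htab : ∀ r : ℕ, r.Prime → r < 13 → (∃ z : ℤ, (r : ℤ) ∣ z * z - (Q : ℤ)) →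
      ∃ β : ℤ√(Q : ℤ), β.norm.natAbs = r) :
    ∀ r : ℕ, r.Prime → (∃ z : ℤ, (r : ℤ) ∣ z * z - (Q : ℤ)) →
      ∃ β : ℤ√(Q : ℤ), β.norm.natAbs = r := by
  intro r
  induction r using Nat.strong_induction_on with
  | _ r ih =>
    intro hr hz
    rcases lt_or_ge r 13 with hlt | hge
    · exact htab r hr hlt hz
    · obtain ⟨z, hz⟩ := hz
      have hr0 : (0 : ℤ) < r := by exact_mod_cast hr.pos
      set x0 : ℤ := z % r with hx0
      have hx00 : 0 ≤ x0 := Int.emod_nonneg z (by positivity)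
      have hx01 : x0 < r := Int.emod_lt_of_pos z hr0
      have h1 : (r : ℤ) ∣ x0 - z := by
        rw [hx0, Int.emod_def]; exact ⟨-(z / r), by ring⟩
      set x : ℤ := if 2 * x0 ≤ r then x0 else x0 - r with hx
      have hxz : (r : ℤ) ∣ x - z := by
        rcases le_or_gt (2 * x0) (r : ℤ) with h | h
        · rw [hx, if_pos h]; exact h1
        · rw [hx, if_neg (not_le.mpr h)]
          have : x0 - r - z = (x0 - z) + (-1) * r := by ring
          rw [this]; exact dvd_add h1 ⟨-1, by ring⟩
      have hxb : 4 * (x * x) ≤ (r : ℤ) * r := by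
        have h2 : -(r : ℤ) ≤ 2 * x ∧ 2 * x ≤ r := by
          rcases le_or_gt (2 * x0) (r : ℤ) with h | h
          · rw [hx, if_pos h]; omega
          · rw [hx, if_neg (not_le.mpr h)]; omega
        nlinarith [h2.1, h2.2]
      set N : ℤ := x * x - Q with hNdef
      have hN0 : N ≠ 0 := sub_ne_zero.mpr (hQns x)
      have hdvd : (r : ℤ) ∣ N := by
        have he : N = (z * z - Q) + (x - z) * (x + z) := by rw [hNdef]; ring
        rw [he]; exact dvd_add hz (hxz.mul_right _)
      have hrr : (169 : ℤ) ≤ (r : ℤ) * r := by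
        have : (13 : ℤ) ≤ r := by exact_mod_cast hge
        nlinarith
      have habs : |N| < (r : ℤ) * r := by
        rw [abs_lt]
        constructor
        · have hQ' : (Q : ℤ) < 169 := by exact_mod_cast hQlt
          have hxx : 0 ≤ x * x := mul_self_nonneg x
          rw [hNdef]; linarith
        · nlinarith [sq_nonneg x]
      have hNabs : (N.natAbs : ℤ) < (r : ℤ) * r := by
        rwa [Int.abs_eq_natAbs] at habs
      have hdn : r ∣ N.natAbs := by
        have := Int.natAbs_dvd_natAbs.mpr hdvd
        simpa using this
      set m' : ℕ := N.natAbs / r with hm'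
      have hNm : N.natAbs = r * m' := (Nat.mul_div_cancel' hdn).symm
      have hm'pos : 0 < m' :=
        Nat.pos_of_ne_zero (fun h => hN0 (Int.natAbs_eq_zero.mp (by simp [hNm, h])))
      have hm'lt : m' < r := by
        have h9 : r * m' < r * r := by
          have h8 := hNabs
          rw [hNm] at h8
          exact_mod_cast h8
        exact Nat.lt_of_mul_lt_mul_left h9
      have hαn : (⟨x, 1⟩ : ℤ√(Q : ℤ)).norm.natAbs = r * m' := by
        have : (⟨x, 1⟩ : ℤ√(Q : ℤ)).norm = N := by rw [norm_def]; push_cast; ring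
        rw [this, hNm]
      obtain ⟨γ, _, hγ⟩ := peel m' r (⟨x, 1⟩ : ℤ√(Q : ℤ)) hm'pos hαn (by
        intro s hs hd
        refine ih s (lt_of_le_of_lt (Nat.le_of_dvd hm'pos hd) hm'lt) hs ⟨x, ?_⟩
        have hsN : s ∣ N.natAbs := hNm ▸ hd.mul_left r
        exact hNdef ▸ Int.dvd_natAbs.mp (Int.natCast_dvd_natCast.mpr hsN))
      exact ⟨γ, hγ⟩


theorem mk_norm (Q : ℕ) (u v : ℤ) (r : ℕ)
    (h : u * u - (Q : ℤ) * v * v = r ∨ u * u - (Q : ℤ) * v * v = -r) :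
    ∃ β : ℤ√(Q : ℤ), β.norm.natAbs = r :=
  ⟨⟨u, v⟩, by rw [norm_def]; rcases h with h | h <;> rw [h] <;> simp⟩

theorem no_sol (Q r : ℕ) [NeZero r] (h : ∀ w : ZMod r, w * w ≠ (Q : ZMod r))
    (hz : ∃ z : ℤ, (r : ℤ) ∣ z * z - (Q : ℤ)) : False := by
  obtain ⟨z, hz⟩ := hz
  have hc : ((z * z - (Q : ℤ) : ℤ) : ZMod r) = 0 :=
    (ZMod.intCast_zmod_eq_zero_iff_dvd _ r).mpr hz
  push_cast at hc
  exact h z (by linear_combination hc)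

theorem nonsq (Q : ℕ) (hlt : Q < 169) (h : ∀ n : ℕ, n < 13 → n * n ≠ Q) :
    ∀ x : ℤ, x * x ≠ (Q : ℤ) := by
  intro x hx
  have h1 : x.natAbs * x.natAbs = Q := by
    have h2 : ((x.natAbs * x.natAbs : ℕ) : ℤ) = x * x := Int.natAbs_mul_self
    rw [hx] at h2
    exact_mod_cast h2
  have h3 : x.natAbs < 13 := by nlinarith [h1, hlt]
  exact h x.natAbs h3 h1

theorem htab3 : ∀ r : ℕ, r.Prime → r < 13 → (∃ z : ℤ, (r : ℤ) ∣ z * z - (3 : ℤ)) →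
    ∃ β : ℤ√(3 : ℤ), β.norm.natAbs = r := by
  intro r hr hlt hz
  interval_cases r
  · exact absurd hr (by norm_num)
  · exact absurd hr (by norm_num)
  · exact mk_norm 3 1 1 2 (Or.inr (by norm_num))
  · exact mk_norm 3 0 1 3 (Or.inr (by norm_num))
  · exact absurd hr (by norm_num)
  · exact (no_sol 3 5 (by decide) hz).elim
  · exact absurd hr (by norm_num)
  · exact (no_sol 3 7 (by decide) hz).elim
  · exact absurd hr (by norm_num)
  · exact absurd hr (by norm_num)
  · exact absurd hr (by norm_num)
  · exact mk_norm 3 1 2 11 (Or.inr (by norm_num))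
  · exact absurd hr (by norm_num)

theorem htab7 : ∀ r : ℕ, r.Prime → r < 13 → (∃ z : ℤ, (r : ℤ) ∣ z * z - (7 : ℤ)) →
    ∃ β : ℤ√(7 : ℤ), β.norm.natAbs = r := by
  intro r hr hlt hz
  interval_cases r
  · exact absurd hr (by norm_num)
  · exact absurd hr (by norm_num)
  · exact mk_norm 7 3 1 2 (Or.inl (by norm_num))
  · exact mk_norm 7 2 1 3 (Or.inr (by norm_num))
  · exact absurd hr (by norm_num)
  · exact (no_sol 7 5 (by decide) hz).elim
  · exact absurd hr (by norm_num)
  · exact mk_norm 7 0 1 7 (Or.inr (by norm_num))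
  · exact absurd hr (by norm_num)
  · exact absurd hr (by norm_num)
  · exact absurd hr (by norm_num)
  · exact (no_sol 7 11 (by decide) hz).elim
  · exact absurd hr (by norm_num)

theorem htab11 : ∀ r : ℕ, r.Prime → r < 13 → (∃ z : ℤ, (r : ℤ) ∣ z * z - (11 : ℤ)) →
    ∃ β : ℤ√(11 : ℤ), β.norm.natAbs = r := by
  intro r hr hlt hz
  interval_cases r
  · exact absurd hr (by norm_num)
  · exact absurd hr (by norm_num)
  · exact mk_norm 11 3 1 2 (Or.inr (by norm_num))
  · exact (no_sol 11 3 (by decide) hz).elim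
  · exact absurd hr (by norm_num)
  · exact mk_norm 11 4 1 5 (Or.inl (by norm_num))
  · exact absurd hr (by norm_num)
  · exact mk_norm 11 2 1 7 (Or.inr (by norm_num))
  · exact absurd hr (by norm_num)
  · exact absurd hr (by norm_num)
  · exact absurd hr (by norm_num)
  · exact mk_norm 11 0 1 11 (Or.inr (by norm_num))
  · exact absurd hr (by norm_num)

theorem htab19 : ∀ r : ℕ, r.Prime → r < 13 → (∃ z : ℤ, (r : ℤ) ∣ z * z - (19 : ℤ)) →
    ∃ β : ℤ√(19 : ℤ), β.norm.natAbs = r := by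
  intro r hr hlt hz
  interval_cases r
  · exact absurd hr (by norm_num)
  · exact absurd hr (by norm_num)
  · exact mk_norm 19 13 3 2 (Or.inr (by norm_num))
  · exact mk_norm 19 4 1 3 (Or.inr (by norm_num))
  · exact absurd hr (by norm_num)
  · exact mk_norm 19 9 2 5 (Or.inl (by norm_num))
  · exact absurd hr (by norm_num)
  · exact (no_sol 19 7 (by decide) hz).elim
  · exact absurd hr (by norm_num)
  · exact absurd hr (by norm_num)
  · exact absurd hr (by norm_num)
  · exact (no_sol 19 11 (by decide) hz).elim
  · exact absurd hr (by norm_num)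

theorem htab43 : ∀ r : ℕ, r.Prime → r < 13 → (∃ z : ℤ, (r : ℤ) ∣ z * z - (43 : ℤ)) →
    ∃ β : ℤ√(43 : ℤ), β.norm.natAbs = r := by
  intro r hr hlt hz
  interval_cases r
  · exact absurd hr (by norm_num)
  · exact absurd hr (by norm_num)
  · exact mk_norm 43 59 9 2 (Or.inr (by norm_num))
  · exact mk_norm 43 13 2 3 (Or.inr (by norm_num))
  · exact absurd hr (by norm_num)
  · exact (no_sol 43 5 (by decide) hz).elim
  · exact absurd hr (by norm_num)
  · exact mk_norm 43 6 1 7 (Or.inr (by norm_num))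
  · exact absurd hr (by norm_num)
  · exact absurd hr (by norm_num)
  · exact absurd hr (by norm_num)
  · exact (no_sol 43 11 (by decide) hz).elim
  · exact absurd hr (by norm_num)

theorem htab67 : ∀ r : ℕ, r.Prime → r < 13 → (∃ z : ℤ, (r : ℤ) ∣ z * z - (67 : ℤ)) →
    ∃ β : ℤ√(67 : ℤ), β.norm.natAbs = r := by
  intro r hr hlt hz
  interval_cases r
  · exact absurd hr (by norm_num)
  · exact absurd hr (by norm_num)
  · exact mk_norm 67 221 27 2 (Or.inr (by norm_num))
  · exact mk_norm 67 8 1 3 (Or.inr (by norm_num))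
  · exact absurd hr (by norm_num)
  · exact (no_sol 67 5 (by decide) hz).elim
  · exact absurd hr (by norm_num)
  · exact mk_norm 67 90 11 7 (Or.inr (by norm_num))
  · exact absurd hr (by norm_num)
  · exact absurd hr (by norm_num)
  · exact absurd hr (by norm_num)
  · exact mk_norm 67 49 6 11 (Or.inr (by norm_num))
  · exact absurd hr (by norm_num)

theorem htab163 : ∀ r : ℕ, r.Prime → r < 13 → (∃ z : ℤ, (r : ℤ) ∣ z * z - (163 : ℤ)) →
    ∃ β : ℤ√(163 : ℤ), β.norm.natAbs = r := by
  intro r hr hlt hz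
  interval_cases r
  · exact absurd hr (by norm_num)
  · exact absurd hr (by norm_num)
  · exact mk_norm 163 8005 627 2 (Or.inr (by norm_num))
  · exact mk_norm 163 932 73 3 (Or.inr (by norm_num))
  · exact absurd hr (by norm_num)
  · exact (no_sol 163 5 (by decide) hz).elim
  · exact absurd hr (by norm_num)
  · exact mk_norm 163 51 4 7 (Or.inr (by norm_num))
  · exact absurd hr (by norm_num)
  · exact absurd hr (by norm_num)
  · exact absurd hr (by norm_num)
  · exact mk_norm 163 383 30 11 (Or.inr (by norm_num))
  · exact absurd hr (by norm_num)


theorem main_aux (q p : ℕ) [Fact p.Prime] (hq4 : q % 4 = 3) (hqlt : q < 169)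
    (hQns : ∀ x : ℤ, x * x ≠ (q : ℤ))
    (htab : ∀ r : ℕ, r.Prime → r < 13 → (∃ z : ℤ, (r : ℤ) ∣ z * z - (q : ℤ)) →
      ∃ β : ℤ√(q : ℤ), β.norm.natAbs = r)
    (hp : p % 4 = 1) (hleg : legendreSym p (-(q : ℤ)) = 1) :
    ∃ u v : ℤ, 0 < u ∧ 0 < v ∧ (p : ℤ) = u ^ 2 - q * v ^ 2 := by
  have hpp : p.Prime := Fact.out
  haveI : NeZero p := ⟨hpp.ne_zero⟩
  have h0 : ((-(q : ℤ) : ℤ) : ZMod p) ≠ 0 := by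
    intro h
    rw [(legendreSym.eq_zero_iff p _).mpr h] at hleg
    exact absurd hleg (by norm_num)
  have hsq : IsSquare ((-(q : ℤ) : ℤ) : ZMod p) := (legendreSym.eq_one_iff p h0).mp hleg
  have hsm1 : IsSquare (-1 : ZMod p) := ZMod.exists_sq_eq_neg_one_iff.mpr (by omega)
  have hq' : IsSquare (((q : ℤ) : ZMod p)) := by
    have he : (((q : ℤ)) : ZMod p) = (-1) * ((-(q : ℤ) : ℤ) : ZMod p) := by push_cast; ring
    rw [he]
    exact hsm1.mul hsq
  obtain ⟨w, hw⟩ := hq'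
  obtain ⟨z, hzw⟩ := ZMod.intCast_surjective w
  have hzz : (p : ℤ) ∣ z * z - (q : ℤ) := by
    apply (ZMod.intCast_zmod_eq_zero_iff_dvd _ p).mp
    push_cast
    push_cast at hw
    rw [hzw, ← hw]
    ring
  obtain ⟨β, hβ⟩ := reach q hqlt hQns htab p hpp ⟨z, hzz⟩
  set u := β.re with hu
  set v := β.im with hv
  have hnd : β.norm = u * u - (q : ℤ) * v * v := norm_def β
  obtain ⟨cu, hcu⟩ : ∃ c, u * u = 4 * c ∨ u * u = 4 * c + 1 := by
    rcases Int.even_or_odd u with ⟨k, hk⟩ | ⟨k, hk⟩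
    · exact ⟨k * k, Or.inl (by rw [hk]; ring)⟩
    · exact ⟨k * k + k, Or.inr (by rw [hk]; ring)⟩
  obtain ⟨cv, hcv⟩ : ∃ c, v * v = 4 * c ∨ v * v = 4 * c + 1 := by
    rcases Int.even_or_odd v with ⟨k, hk⟩ | ⟨k, hk⟩
    · exact ⟨k * k, Or.inl (by rw [hk]; ring)⟩
    · exact ⟨k * k + k, Or.inr (by rw [hk]; ring)⟩
  obtain ⟨l, hl⟩ : ∃ l : ℤ, (q : ℤ) = 4 * l + 3 := ⟨((q / 4 : ℕ) : ℤ), by push_cast; omega⟩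
  obtain ⟨e, he⟩ : ∃ e : ℤ, (q : ℤ) * v * v = 4 * e + 3 * (v * v) :=
    ⟨l * (v * v), by rw [hl]; ring⟩
  rcases Int.natAbs_eq_iff.mp hβ with hcase | hcase
  · -- norm = p
    rw [hnd] at hcase
    have hv0 : v ≠ 0 := by
      intro h
      rw [h] at hcase
      simp at hcase
      have h1 : ((u.natAbs * u.natAbs : ℕ) : ℤ) = (p : ℤ) := by
        rw [Int.natAbs_mul_self]; omega
      have h2 : u.natAbs * u.natAbs = p := by exact_mod_cast h1
      have h3 := hpp.eq_one_or_self_of_dvd u.natAbs ⟨u.natAbs, h2.symm⟩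
      have h4 := hpp.two_le
      rcases h3 with h3 | h3 <;> rw [h3] at h2 <;> nlinarith
    have hu0 : u ≠ 0 := by
      intro h
      rw [h] at hcase
      have h1 : (0 : ℤ) < p := by exact_mod_cast hpp.pos
      have h2 : (0 : ℤ) ≤ (q : ℤ) := by positivity
      nlinarith [mul_self_nonneg v]
    refine ⟨|u|, |v|, abs_pos.mpr hu0, abs_pos.mpr hv0, ?_⟩
    rw [sq_abs, sq_abs]
    linear_combination (-1 : ℤ) * hcase
  · -- norm = -p : impossible mod 4
    exfalso
    rw [hnd] at hcase
    omega



/-- Let q ∈ {3,7,11,19,43,67,163} and p ≡ 1 (mod 4) a prime with (-q/p) = 1.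
Then there exist positive integers u, v with p = u² - q v². -/
theorem exists_rep (q p : ℕ) [Fact p.Prime]
    (hq : q ∈ ({3, 7, 11, 19, 43, 67, 163} : Set ℕ))
    (hp : p % 4 = 1) (hleg : legendreSym p (-(q : ℤ)) = 1) :
    ∃ u v : ℤ, 0 < u ∧ 0 < v ∧ (p : ℤ) = u ^ 2 - q * v ^ 2 := by
  simp only [Set.mem_insert_iff, Set.mem_singleton_iff] at hq
  rcases hq with rfl | rfl | rfl | rfl | rfl | rfl | rfl
  · exact main_aux 3 p rfl (by norm_num) (nonsq 3 (by norm_num) (by decide)) htab3 hp hleg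
  · exact main_aux 7 p rfl (by norm_num) (nonsq 7 (by norm_num) (by decide)) htab7 hp hleg
  · exact main_aux 11 p rfl (by norm_num) (nonsq 11 (by norm_num) (by decide)) htab11 hp hleg
  · exact main_aux 19 p rfl (by norm_num) (nonsq 19 (by norm_num) (by decide)) htab19 hp hleg
  · exact main_aux 43 p rfl (by norm_num) (nonsq 43 (by norm_num) (by decide)) htab43 hp hleg
  · exact main_aux 67 p rfl (by norm_num) (nonsq 67 (by norm_num) (by decide)) htab67 hp hleg
  · exact main_aux 163 p rfl (by norm_num) (nonsq 163 (by norm_num) (by decide)) htab163 hp hleg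
end

section
/- Let K be a number field, L a quadratic extension of K with nontrivial automorphism ψ, and 𝔭 a prime of O_K unramified in L. If β ∈ O_L satisfies β ≡ ψ(β) (mod 𝔭O_L), then there exists β' ∈ O_K with β' ≡ β (mod 𝔭O_L). -/
set_option linter.unusedSectionVars false
set_option maxHeartbeats 1000000
set_option synthInstance.maxHeartbeats 400000

open NumberField Module

section AuxDescend

variable {K L : Type*} [Field K] [NumberField K] [Field L] [NumberField L] [Algebra K L]




noncomputable def myLift (ψ : (𝓞 L) ≃ₐ[𝓞 K] (𝓞 L)) : L ≃+* L :=
  IsLocalization.ringEquivOfRingEquiv (M := nonZeroDivisors (𝓞 L)) (T := nonZeroDivisors (𝓞 L)) L L ψ.toRingEquiv (by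
    ext x
    simp only [Submonoid.mem_map, mem_nonZeroDivisors_iff_ne_zero]
    constructor
    · rintro ⟨y, hy, rfl⟩
      simpa using hy
    · intro hx
      exact ⟨ψ.symm x, by simpa using hx, by simp⟩)

theorem myLift_coe (ψ : (𝓞 L) ≃ₐ[𝓞 K] (𝓞 L)) (x : 𝓞 L) :
    myLift ψ (algebraMap (𝓞 L) L x) = algebraMap (𝓞 L) L (ψ x) :=
  IsLocalization.ringEquivOfRingEquiv_eq (S := L) (Q := L) (M := nonZeroDivisors (𝓞 L)) (T := nonZeroDivisors (𝓞 L)) _ x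

theorem myLift_commutes (ψ : (𝓞 L) ≃ₐ[𝓞 K] (𝓞 L)) (k : K) :
    myLift ψ (algebraMap K L k) = algebraMap K L k := by
  have h1 : ∀ z : 𝓞 K, myLift ψ (algebraMap K L (algebraMap (𝓞 K) K z))
      = algebraMap K L (algebraMap (𝓞 K) K z) := by
    intro z
    rw [← IsScalarTower.algebraMap_apply (𝓞 K) K L,
      IsScalarTower.algebraMap_apply (𝓞 K) (𝓞 L) L, myLift_coe, AlgEquiv.commutes,
      ← IsScalarTower.algebraMap_apply, IsScalarTower.algebraMap_apply (𝓞 K) K L]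
  obtain ⟨x, y, hy, rfl⟩ := IsFractionRing.div_surjective (A := 𝓞 K) k
  rw [map_div₀, map_div₀, h1, h1]

noncomputable def myLiftAlg (ψ : (𝓞 L) ≃ₐ[𝓞 K] (𝓞 L)) : L ≃ₐ[K] L :=
  { myLift ψ with commutes' := myLift_commutes ψ }

theorem myLiftAlg_coe (ψ : (𝓞 L) ≃ₐ[𝓞 K] (𝓞 L)) (x : 𝓞 L) :
    myLiftAlg ψ (algebraMap (𝓞 L) L x) = algebraMap (𝓞 L) L (ψ x) :=
  myLift_coe ψ x


theorem mem_range_descend (t : 𝓞 L) (k : K)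
    (hk : algebraMap K L k = algebraMap (𝓞 L) L t) :
    ∃ y : 𝓞 K, algebraMap (𝓞 K) (𝓞 L) y = t := by
  have hki : IsIntegral ℤ k := by
    rw [← isIntegral_algebraMap_iff (algebraMap K L).injective, hk]
    exact (RingOfIntegers.isIntegral t).map (IsScalarTower.toAlgHom ℤ (𝓞 L) L)
  refine ⟨IsIntegralClosure.mk' (𝓞 K) k hki, ?_⟩
  apply RingOfIntegers.coe_injective
  rw [← IsScalarTower.algebraMap_apply (𝓞 K) (𝓞 L) L,
    IsScalarTower.algebraMap_apply (𝓞 K) K L, IsIntegralClosure.algebraMap_mk']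
  exact hk

theorem sigma_eq_id (hdim : finrank K L = 2) (σ : L ≃ₐ[K] L) (x : L)
    (hx : ¬ ∃ k : K, algebraMap K L k = x) (hfix : σ x = x) (z : L) : σ z = z := by
  have hli : LinearIndependent K ![x, (1 : L)] := by
    rw [linearIndependent_fin2]
    refine ⟨by simp, fun a ha => ?_⟩
    simp only [Matrix.cons_val_one, Matrix.head_cons, Matrix.cons_val_zero] at ha
    exact hx ⟨a, by rw [← ha, Algebra.smul_def, mul_one]⟩
  let b := basisOfLinearIndependentOfCardEqFinrank hli (by simp [hdim])
  have hb : ⇑b = ![x, (1 : L)] := coe_basisOfLinearIndependentOfCardEqFinrank hli _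
  have : σ.toLinearMap = LinearMap.id := by
    apply b.ext
    intro i
    fin_cases i <;> simp [hb, hfix]
  calc σ z = σ.toLinearMap z := rfl
  _ = z := by rw [this]; rfl

theorem psi_fixed_descend (hdim : finrank K L = 2)
    (ψ : (𝓞 L) ≃ₐ[𝓞 K] (𝓞 L)) (hψ : ψ ≠ AlgEquiv.refl)
    (t : 𝓞 L) (ht : ψ t = t) : ∃ y : 𝓞 K, algebraMap (𝓞 K) (𝓞 L) y = t := by
  obtain ⟨γ, hγ⟩ : ∃ γ : 𝓞 L, ψ γ ≠ γ := by
    by_contra h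
    push_neg at h
    exact hψ (AlgEquiv.ext h)
  by_cases hc : ∃ k : K, algebraMap K L k = algebraMap (𝓞 L) L t
  · obtain ⟨k, hk⟩ := hc
    exact mem_range_descend t k hk
  · exfalso
    have h1 : myLiftAlg ψ (algebraMap (𝓞 L) L t) = algebraMap (𝓞 L) L t := by
      rw [myLiftAlg_coe, ht]
    have h2 := sigma_eq_id hdim (myLiftAlg ψ) _ hc h1 (algebraMap (𝓞 L) L γ)
    rw [myLiftAlg_coe] at h2
    exact hγ (RingOfIntegers.coe_injective h2)

theorem psi_sq (hdim : finrank K L = 2)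
    (ψ : (𝓞 L) ≃ₐ[𝓞 K] (𝓞 L)) (hψ : ψ ≠ AlgEquiv.refl) (x : 𝓞 L) : ψ (ψ x) = x := by
  obtain ⟨γ, hγ⟩ : ∃ γ : 𝓞 L, ψ γ ≠ γ := by
    by_contra h
    push_neg at h
    exact hψ (AlgEquiv.ext h)
  haveI : FiniteDimensional K L := .of_finrank_eq_succ hdim
  set σ := myLiftAlg ψ with hσ
  set g : L := algebraMap (𝓞 L) L γ with hg
  have hγK : ¬ ∃ k : K, algebraMap K L k = g := by
    rintro ⟨k, hk⟩
    obtain ⟨y, hy⟩ := mem_range_descend γ k hk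
    exact hγ (by rw [← hy, AlgEquiv.commutes])
  have hσγ : σ g ≠ g := by
    rw [hg, myLiftAlg_coe]
    exact fun h => hγ (RingOfIntegers.coe_injective h)
  -- roots of the minimal polynomial
  have hint : IsIntegral K g := Algebra.IsIntegral.isIntegral g
  have hp0 : minpoly K g ≠ 0 := minpoly.ne_zero hint
  have hroot : ∀ w : L, (Polynomial.aeval w) (minpoly K g) = 0 →
      (Polynomial.aeval (σ w)) (minpoly K g) = 0 := by
    intro w hw
    have h := Polynomial.aeval_algHom_apply (σ : L →ₐ[K] L) w (minpoly K g)
    simpa [hw] using h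
  have hdeg : (minpoly K g).natDegree ≤ 2 := hdim ▸ minpoly.natDegree_le g
  have hσσγ : σ (σ g) = g := by
    classical
    by_contra hne
    have h1 : (Polynomial.aeval g) (minpoly K g) = 0 := minpoly.aeval K g
    have h2 := hroot _ h1
    have h3 := hroot _ h2
    have hmem : ∀ w : L, (Polynomial.aeval w) (minpoly K g) = 0 →
        w ∈ ((minpoly K g).aroots L).toFinset := by
      intro w hw
      rw [Multiset.mem_toFinset, Polynomial.mem_aroots]
      exact ⟨hp0, hw⟩
    have hg1 : g ∉ ({σ g, σ (σ g)} : Finset L) := by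
      simp only [Finset.mem_insert, Finset.mem_singleton]
      push_neg
      exact ⟨fun h => hσγ h.symm, fun h => hne h.symm⟩
    have hg2 : σ g ∉ ({σ (σ g)} : Finset L) := by
      simp only [Finset.mem_singleton]
      exact fun h => hσγ (σ.injective h.symm)
    have hsub : ({g, σ g, σ (σ g)} : Finset L) ⊆ ((minpoly K g).aroots L).toFinset := by
      intro w hw
      simp only [Finset.mem_insert, Finset.mem_singleton] at hw
      rcases hw with rfl | rfl | rfl
      exacts [hmem _ h1, hmem _ h2, hmem _ h3]
    have hcard : ({g, σ g, σ (σ g)} : Finset L).card = 3 := by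
      rw [Finset.card_insert_of_notMem hg1, Finset.card_insert_of_notMem hg2,
        Finset.card_singleton]
    have hle : ((minpoly K g).aroots L).toFinset.card ≤ 2 :=
      (Multiset.toFinset_card_le _).trans ((Polynomial.card_roots' _).trans
        (Polynomial.natDegree_map_le.trans hdeg))
    have := (hcard ▸ Finset.card_le_card hsub).trans hle
    omega
  -- now σ ∘ σ fixes g and hence is the identity
  have hfix := sigma_eq_id hdim (σ.trans σ) g hγK hσσγ (algebraMap (𝓞 L) L x)
  simp only [AlgEquiv.trans_apply, hσ, myLiftAlg_coe] at hfix
  exact RingOfIntegers.coe_injective hfix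

end AuxDescend

/-- Let K be a number field, L a quadratic extension of K with nontrivial
automorphism ψ, and 𝔭 a prime of O_K unramified in L. If β ∈ O_L satisfies
β ≡ ψ(β) (mod 𝔭O_L), then there exists β' ∈ O_K with β' ≡ β (mod 𝔭O_L). -/
theorem descend_congruent (K L : Type*) [Field K] [NumberField K]
    [Field L] [NumberField L] [Algebra K L] (hdim : finrank K L = 2)
    (ψ : (𝓞 L) ≃ₐ[𝓞 K] (𝓞 L)) (hψ : ψ ≠ AlgEquiv.refl)
    (𝔭 : Ideal (𝓞 K)) (h𝔭 : 𝔭.IsPrime) (h𝔭0 : 𝔭 ≠ ⊥)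
    (hur : ∀ 𝔔 : Ideal (𝓞 L), 𝔔.IsPrime →
      ¬ 𝔔 ^ 2 ∣ Ideal.map (algebraMap (𝓞 K) (𝓞 L)) 𝔭)
    (β : 𝓞 L)
    (hβ : β - ψ β ∈ Ideal.map (algebraMap (𝓞 K) (𝓞 L)) 𝔭) :
    ∃ β' : 𝓞 K,
      algebraMap (𝓞 K) (𝓞 L) β' - β ∈ Ideal.map (algebraMap (𝓞 K) (𝓞 L)) 𝔭 := by
  haveI := h𝔭
  set f := algebraMap (𝓞 K) (𝓞 L) with hf
  set 𝔓 := Ideal.map f 𝔭 with h𝔓def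
  have hψsq : ∀ x, ψ (ψ x) = x := psi_sq hdim ψ hψ
  by_cases hall : ∀ θ : 𝓞 L, θ + ψ θ ∈ 𝔓
  · -- "characteristic 2" branch
    have h2L : (2 : 𝓞 L) ∈ 𝔓 := by
      have := hall 1
      rwa [map_one, one_add_one_eq_two] at this
    have hinj : Function.Injective f := fun a b h => by
      apply RingOfIntegers.coe_injective
      apply (algebraMap K L).injective
      rw [← IsScalarTower.algebraMap_apply (𝓞 K) K L,
        ← IsScalarTower.algebraMap_apply (𝓞 K) K L,
        IsScalarTower.algebraMap_apply (𝓞 K) (𝓞 L) L,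
        IsScalarTower.algebraMap_apply (𝓞 K) (𝓞 L) L]
      rw [← hf, h]
    obtain ⟨Q, hQp, hQc⟩ := Ideal.exists_ideal_over_prime_of_isIntegral_of_isDomain 𝔭
      (by rw [(RingHom.injective_iff_ker_eq_bot f).mp hinj]; exact bot_le)
    haveI := hQp
    have h𝔓Q : 𝔓 ≤ Q := Ideal.map_le_iff_le_comap.mpr (le_of_eq hQc.symm)
    have h2K : (2 : 𝓞 K) ∈ 𝔭 := by
      rw [← hQc, Ideal.mem_comap]
      have h22 : f 2 = (2 : 𝓞 L) := map_ofNat f 2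
      show f 2 ∈ Q
      rw [h22]
      exact h𝔓Q h2L
    obtain ⟨n, hn⟩ := psi_fixed_descend hdim ψ hψ (β * ψ β) (by rw [map_mul, hψsq, mul_comm])
    haveI : Fintype (𝓞 K ⧸ 𝔭) := @Fintype.ofFinite _ (Ideal.finiteQuotientOfFreeOfNeBot 𝔭 h𝔭0)
    have hchar : (2 : 𝓞 K ⧸ 𝔭) = 0 := by
      have : ((2 : 𝓞 K ⧸ 𝔭)) = Ideal.Quotient.mk 𝔭 2 := (map_ofNat (Ideal.Quotient.mk 𝔭) 2).symm
      rw [this]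
      exact Ideal.Quotient.eq_zero_iff_mem.mpr h2K
    have hsurj : Function.Surjective (fun a : 𝓞 K ⧸ 𝔭 => a * a) := by
      apply Finite.surjective_of_injective
      intro a b hab
      simp only at hab
      have hz : (a - b) * (a + b) = 0 := by linear_combination hab
      rcases mul_eq_zero.mp hz with h | h
      · exact sub_eq_zero.mp h
      · have hb : a = -b := by linear_combination h
        have hbb : -b = b := by linear_combination (-b) * hchar
        rw [hb, hbb]
    obtain ⟨m', hm'⟩ := hsurj (Ideal.Quotient.mk 𝔭 n)
    obtain ⟨m, rfl⟩ := Ideal.Quotient.mk_surjective m'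
    simp only at hm'
    rw [← map_mul] at hm'
    have hmn : m * m - n ∈ 𝔭 := Ideal.Quotient.eq.mp hm'
    have hδ : (f m - β) * (f m - β) ∈ 𝔓 := by
      have h1 : f (m * m - n) ∈ 𝔓 := Ideal.mem_map_of_mem f hmn
      have key : (f m - β) * (f m - β)
          = f (m * m - n) - β * (β - ψ β) + (β * β - f m * β) * 2 := by
        rw [map_sub, map_mul]
        linear_combination hn
      rw [key]
      exact Ideal.add_mem _ (Ideal.sub_mem _ h1 (Ideal.mul_mem_left _ _ hβ))
        (Ideal.mul_mem_left _ _ h2L)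
    have h𝔓ne : 𝔓 ≠ ⊥ := by
      obtain ⟨a, ha, ha0⟩ := Submodule.ne_bot_iff 𝔭 |>.mp h𝔭0
      refine (Submodule.ne_bot_iff 𝔓).mpr ⟨f a, Ideal.mem_map_of_mem f ha, fun h0 => ha0 ?_⟩
      exact hinj (by rw [h0, map_zero])
    have hsf : Squarefree 𝔓 := by
      intro I hI
      by_contra hIu
      have hI0 : I ≠ 0 := by
        rintro rfl
        rw [mul_zero] at hI
        have h00 : 𝔓 = 0 := zero_dvd_iff.mp hI
        rw [Ideal.zero_eq_bot] at h00
        exact h𝔓ne h00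
      obtain ⟨P, hP, hPI⟩ := WfDvdMonoid.exists_irreducible_factor hIu hI0
      have hPp : Prime P := UniqueFactorizationMonoid.irreducible_iff_prime.mp hP
      have hPip : P.IsPrime := Ideal.isPrime_of_prime hPp
      refine hur P hPip ?_
      have hPP : P * P ∣ I * I := mul_dvd_mul hPI hPI
      rw [pow_two]
      exact hPP.trans hI
    refine ⟨m, ?_⟩
    have hdvd : 𝔓 ∣ Ideal.span {f m - β} := by
      rw [← Squarefree.dvd_pow_iff_dvd (y := Ideal.span {f m - β}) hsf
        (n := 2) (by norm_num), Ideal.span_singleton_pow, Ideal.dvd_span_singleton, pow_two]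
      exact hδ
    exact Ideal.dvd_span_singleton.mp hdvd
  · push_neg at hall
    obtain ⟨θ, hθ⟩ := hall
    obtain ⟨y, hy⟩ := psi_fixed_descend hdim ψ hψ (θ + ψ θ)
      (by rw [map_add, hψsq, add_comm])
    have hy𝔭 : y ∉ 𝔭 := fun h => hθ (hy ▸ Ideal.mem_map_of_mem f h)
    haveI hmax : 𝔭.IsMaximal := Ideal.IsPrime.isMaximal h𝔭 h𝔭0
    obtain ⟨c, i, hi, hci⟩ := hmax.exists_inv hy𝔭
    obtain ⟨z, hz⟩ := psi_fixed_descend hdim ψ hψ (θ * β + ψ (θ * β))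
      (by rw [map_add, hψsq, add_comm])
    rw [map_mul] at hz
    refine ⟨c * z, ?_⟩
    have key : f (c * z) - β = β * f (c * y - 1) + (f c * ψ θ) * (ψ β - β) := by
      rw [map_mul, map_sub, map_mul, map_one]
      linear_combination (f c) * hz - (f c * β) * hy
    rw [key]
    refine Ideal.add_mem _ (Ideal.mul_mem_left _ _ ?_) (Ideal.mul_mem_left _ _ ?_)
    · have hcy : c * y - 1 = -i := by linear_combination hci
      rw [hcy, map_neg]
      exact neg_mem (Ideal.mem_map_of_mem f hi)
    · rw [show ψ β - β = -(β - ψ β) by ring]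
      exact neg_mem hβ
end

section
/- Let K be a number field, 𝔭 an odd prime of O_K, and L a quadratic extension of K containing Q(i) such that 𝔭 splits in L, with nontrivial automorphism ψ of L/K. If ψ fixes Q(i), then for all α ∈ O_K one has (α / 𝔭O_L)_{L,4} = (α / 𝔭)_{K,2}; and if ψ does not fix Q(i), then for all α ∈ O_K with 𝔭 ∤ α one has (α / 𝔭O_L)_{L,4} = 1. -/
open NumberField Module Classical

/-- The n-th power residue symbol: the (unique, when it exists) n-th root of
unity congruent to α^((N(I)-1)/n) modulo I, and 0 otherwise. -/
noncomputable def residueSymbol {R : Type*} [CommRing R] [IsDedekindDomain R]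
    [Module.Free ℤ R] [Module.Finite ℤ R] (n : ℕ) (α : R) (I : Ideal R) : R :=
  if h : ∃ ζ : R, ζ ^ n = 1 ∧ ζ - α ^ ((Ideal.absNorm I - 1) / n) ∈ I then
    h.choose
  else 0

lemma residueSymbol_spec {R : Type*} [CommRing R] [IsDedekindDomain R]
    [Module.Free ℤ R] [Module.Finite ℤ R] {n : ℕ} {α : R} {I : Ideal R}
    (h : ∃ ζ : R, ζ ^ n = 1 ∧ ζ - α ^ ((Ideal.absNorm I - 1) / n) ∈ I) :
    (residueSymbol n α I) ^ n = 1 ∧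
      residueSymbol n α I - α ^ ((Ideal.absNorm I - 1) / n) ∈ I := by
  rw [residueSymbol, dif_pos h]; exact h.choose_spec

lemma residueSymbol_eq_zero {R : Type*} [CommRing R] [IsDedekindDomain R]
    [Module.Free ℤ R] [Module.Finite ℤ R] {n : ℕ} {α : R} {I : Ideal R}
    (hα : α ∈ I) (htop : I ≠ ⊤) (hm : (Ideal.absNorm I - 1) / n ≠ 0) (hn : n ≠ 0) :
    residueSymbol n α I = 0 := by
  rw [residueSymbol, dif_neg]
  rintro ⟨ζ, h1, h2⟩
  apply htop
  rw [Ideal.eq_top_iff_one, ← h1]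
  have hαm : α ^ ((Ideal.absNorm I - 1) / n) ∈ I :=
    I.pow_mem_of_mem hα _ (Nat.pos_of_ne_zero hm)
  have hζ : ζ ∈ I := by have := I.add_mem h2 hαm; simpa using this
  exact I.pow_mem_of_mem hζ _ (Nat.pos_of_ne_zero hn)

lemma roots4 {R : Type*} [CommRing R] [IsDomain R] {j z : R} (hj : j ^ 2 = -1)
    (hz : z ^ 4 = 1) : z = 1 ∨ z = -1 ∨ z = j ∨ z = -j := by
  have h2 : (z ^ 2 - 1) * (z ^ 2 + 1) = 0 := by linear_combination hz
  rcases mul_eq_zero.1 h2 with h | h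
  · have h3 : (z - 1) * (z + 1) = 0 := by linear_combination h
    rcases mul_eq_zero.1 h3 with h' | h'
    · exact Or.inl (by linear_combination h')
    · exact Or.inr (Or.inl (by linear_combination h'))
  · have h3 : (z - j) * (z + j) = 0 := by linear_combination h - hj
    rcases mul_eq_zero.1 h3 with h' | h'
    · exact Or.inr (Or.inr (Or.inl (by linear_combination h')))
    · exact Or.inr (Or.inr (Or.inr (by linear_combination h')))

lemma roots4_unique {R : Type*} [CommRing R] [IsDomain R] {j : R} (hj : j ^ 2 = -1)
    {I : Ideal R} (h2 : (2 : R) ∉ I) {z w : R} (hz : z ^ 4 = 1) (hw : w ^ 4 = 1)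
    (hzw : z - w ∈ I) : z = w := by
  have hδ4 : (z * w ^ 3) ^ 4 = 1 := by
    calc (z * w ^ 3) ^ 4 = z ^ 4 * (w ^ 4) ^ 3 := by ring
    _ = 1 := by rw [hz, hw]; ring
  have hδI : z * w ^ 3 - 1 ∈ I := by
    have heq : z * w ^ 3 - 1 = (z - w) * w ^ 3 + (w ^ 4 - 1) := by ring
    have := I.add_mem (I.mul_mem_right (w ^ 3) hzw)
      (show w ^ 4 - 1 ∈ I by rw [hw]; simpa using I.zero_mem)
    rwa [← heq] at this
  have hsq : (z * w ^ 3) ^ 2 - 1 ∈ I := by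
    have heq : (z * w ^ 3) ^ 2 - 1 = (z * w ^ 3 - 1) * (z * w ^ 3 + 1) := by ring
    rw [heq]; exact I.mul_mem_right _ hδI
  rcases roots4 hj hδ4 with h | h | h | h
  · calc z = z * w ^ 4 := by rw [hw, mul_one]
    _ = (z * w ^ 3) * w := by ring
    _ = w := by rw [h, one_mul]
  · exfalso; apply h2
    have h' : (2 : R) = -(z * w ^ 3 - 1) := by rw [h]; ring
    rw [h']; exact I.neg_mem hδI
  · exfalso; apply h2
    have h' : (2 : R) = -((z * w ^ 3) ^ 2 - 1) := by rw [h]; linear_combination hj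
    rw [h']; exact I.neg_mem hsq
  · exfalso; apply h2
    have h' : (2 : R) = -((z * w ^ 3) ^ 2 - 1) := by rw [h]; linear_combination hj
    rw [h']; exact I.neg_mem hsq

lemma two_not_mem {R : Type*} [CommRing R] {I : Ideal R} {q : ℕ}
    (hq : Odd q) (hqI : (q : R) ∈ I) (htop : I ≠ ⊤) : (2 : R) ∉ I := by
  intro h2
  obtain ⟨m, hm⟩ := hq
  apply htop
  rw [Ideal.eq_top_iff_one]
  have h1 : (1 : R) = (q : R) - 2 * m := by rw [hm]; push_cast; ring
  rw [h1]
  exact I.sub_mem hqI (I.mul_mem_right _ h2)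

set_option maxHeartbeats 4000000 in
set_option synthInstance.maxHeartbeats 1000000 in
/-- Let K be a number field, 𝔭 an odd prime of O_K, and L a quadratic
extension of K containing Q(i) in which 𝔭 splits as 𝔔·ψ(𝔔) with 𝔔 ≠ ψ(𝔔),
where ψ is the nontrivial automorphism of L/K. The quartic symbol at 𝔭O_L is
the product of the symbols at 𝔔 and ψ(𝔔). If ψ fixes Q(i), this quartic
symbol equals the quadratic symbol (α/𝔭)_{K,2} for all α ∈ O_K; if ψ does not
fix Q(i), it equals 1 for all α ∈ O_K with 𝔭 ∤ α. -/
theorem quartic_symbol_split (K L : Type*) [Field K] [NumberField K]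
    [Field L] [NumberField L] [Algebra K L] (hdim : finrank K L = 2)
    (i : 𝓞 L) (hi : i ^ 2 = -1)
    (ψ : (𝓞 L) ≃ₐ[𝓞 K] (𝓞 L)) (hψ : ψ ≠ AlgEquiv.refl)
    (𝔭 : Ideal (𝓞 K)) (h𝔭 : 𝔭.IsPrime) (hodd : Odd (Ideal.absNorm 𝔭))
    (𝔔 : Ideal (𝓞 L)) (h𝔔 : 𝔔.IsPrime)
    (hsplit : Ideal.map (algebraMap (𝓞 K) (𝓞 L)) 𝔭 =
      𝔔 * Ideal.map (ψ : 𝓞 L →+* 𝓞 L) 𝔔)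
    (hne : 𝔔 ≠ Ideal.map (ψ : 𝓞 L →+* 𝓞 L) 𝔔) :
    (ψ i = i →
      ∀ α : 𝓞 K,
        residueSymbol 4 (algebraMap (𝓞 K) (𝓞 L) α) 𝔔 *
            residueSymbol 4 (algebraMap (𝓞 K) (𝓞 L) α)
              (Ideal.map (ψ : 𝓞 L →+* 𝓞 L) 𝔔) =
          algebraMap (𝓞 K) (𝓞 L) (residueSymbol 2 α 𝔭)) ∧
    (ψ i ≠ i →
      ∀ α : 𝓞 K, α ∉ 𝔭 →
        residueSymbol 4 (algebraMap (𝓞 K) (𝓞 L) α) 𝔔 *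
            residueSymbol 4 (algebraMap (𝓞 K) (𝓞 L) α)
              (Ideal.map (ψ : 𝓞 L →+* 𝓞 L) 𝔔) = 1) := by
  set f : 𝓞 K →+* 𝓞 L := algebraMap (𝓞 K) (𝓞 L) with hf
  set 𝔔' : Ideal (𝓞 L) := Ideal.map (ψ : 𝓞 L →+* 𝓞 L) 𝔔 with h𝔔'def
  set q : ℕ := Ideal.absNorm 𝔭 with hqdef
  -- basic facts about 𝔭
  have h𝔭bot : 𝔭 ≠ ⊥ := by
    intro h; rw [h, Ideal.absNorm_bot] at hqdef
    rw [hqdef] at hodd; simp at hodd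
  have h𝔭top : 𝔭 ≠ ⊤ := h𝔭.ne_top
  have hq1 : q ≠ 1 := by
    intro h
    exact h𝔭top (Ideal.absNorm_eq_one_iff.mp (by rw [← hqdef]; exact h))
  have hq0 : q ≠ 0 := by
    intro h; rw [h] at hodd; simp at hodd
  have hmax : 𝔭.IsMaximal := h𝔭.isMaximal h𝔭bot
  have hinj : Function.Injective f := FaithfulSMul.algebraMap_injective _ _
  have hmapbot : Ideal.map f 𝔭 ≠ ⊥ := by
    rw [Ne, Ideal.map_eq_bot_iff_of_injective hinj]; exact h𝔭bot
  have hle𝔔 : Ideal.map f 𝔭 ≤ 𝔔 := hsplit ▸ Ideal.mul_le_left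
  have hle𝔔' : Ideal.map f 𝔭 ≤ 𝔔' := hsplit ▸ Ideal.mul_le_right
  have h𝔔bot : 𝔔 ≠ ⊥ := fun h => hmapbot (le_bot_iff.mp (h ▸ hle𝔔))
  have h𝔔top : 𝔔 ≠ ⊤ := h𝔔.ne_top
  have h𝔔max : 𝔔.IsMaximal := h𝔔.isMaximal h𝔔bot
  -- norms
  have hnorm' : Ideal.absNorm 𝔔' = Ideal.absNorm 𝔔 := by
    have e : ((𝓞 L) ⧸ 𝔔) ≃+* ((𝓞 L) ⧸ 𝔔') :=
      Ideal.quotientEquiv 𝔔 𝔔' (ψ : (𝓞 L) ≃+* (𝓞 L)) rfl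
    rw [Ideal.absNorm_apply, Ideal.absNorm_apply, Submodule.cardQuot_apply,
      Submodule.cardQuot_apply]
    exact (Nat.card_congr e.toEquiv).symm
  have hfin𝔭 : Finite ((𝓞 K) ⧸ 𝔭) := by
    rw [← Ideal.absNorm_ne_zero_iff]; rw [← hqdef]; exact hq0
  haveI := hmax
  letI : Field ((𝓞 K) ⧸ 𝔭) := Ideal.Quotient.field 𝔭
  letI : Fintype ((𝓞 K) ⧸ 𝔭) := Fintype.ofFinite _
  have hcardk : Fintype.card ((𝓞 K) ⧸ 𝔭) = q := by
    rw [← Nat.card_eq_fintype_card, hqdef, Ideal.absNorm_apply, Submodule.cardQuot_apply]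
  have hnormmap : Ideal.absNorm (Ideal.map f 𝔭) = q ^ 2 := by
    letI : Algebra ((𝓞 K) ⧸ 𝔭) ((𝓞 L) ⧸ Ideal.map f 𝔭) :=
      Ideal.Quotient.algebraQuotientOfLEComap (Ideal.map_le_iff_le_comap.mp le_rfl)
    have hfr : finrank ((𝓞 K) ⧸ 𝔭) ((𝓞 L) ⧸ Ideal.map f 𝔭) = 2 := by
      have h := Ideal.finrank_quotient_map (R := 𝓞 K) (S := 𝓞 L) 𝔭 K L
      rw [hdim] at h
      exact h
    have hfinq : Finite ((𝓞 L) ⧸ Ideal.map f 𝔭) := by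
      rw [← Ideal.absNorm_ne_zero_iff, Ne, Ideal.absNorm_eq_zero_iff]; exact hmapbot
    letI : Fintype ((𝓞 L) ⧸ Ideal.map f 𝔭) := Fintype.ofFinite _
    rw [Ideal.absNorm_apply, Submodule.cardQuot_apply, Nat.card_eq_fintype_card,
      card_eq_pow_finrank (K := (𝓞 K) ⧸ 𝔭) (V := (𝓞 L) ⧸ Ideal.map f 𝔭), hfr, hcardk]
  have hq₁ : Ideal.absNorm 𝔔 = q := by
    have hmul : Ideal.absNorm 𝔔 * Ideal.absNorm 𝔔' = q ^ 2 := by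
      rw [← _root_.map_mul Ideal.absNorm, ← hsplit, hnormmap]
    rw [hnorm', ← sq] at hmul
    exact Nat.pow_left_injective (by norm_num) hmul
  have hnorm'q : Ideal.absNorm 𝔔' = q := by rw [hnorm', hq₁]
  have h𝔔'top : 𝔔' ≠ ⊤ := by
    intro h; rw [h, Ideal.absNorm_top] at hnorm'q; exact hq1 hnorm'q.symm
  -- 2 not in the primes above
  have hq𝔔 : ((q : ℕ) : 𝓞 L) ∈ 𝔔 := by
    have := Ideal.absNorm_mem 𝔔; rwa [hq₁] at this
  have hq𝔔' : ((q : ℕ) : 𝓞 L) ∈ 𝔔' := by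
    have := Ideal.absNorm_mem 𝔔'; rwa [hnorm'q] at this
  have h2𝔔 : (2 : 𝓞 L) ∉ 𝔔 := two_not_mem hodd hq𝔔 h𝔔top
  have h2𝔔' : (2 : 𝓞 L) ∉ 𝔔' := two_not_mem hodd hq𝔔' h𝔔'top
  -- residue field of 𝔔
  haveI := h𝔔max
  letI : Field ((𝓞 L) ⧸ 𝔔) := Ideal.Quotient.field 𝔔
  have hfinF : Finite ((𝓞 L) ⧸ 𝔔) := by
    rw [← Ideal.absNorm_ne_zero_iff, Ne, Ideal.absNorm_eq_zero_iff]; exact h𝔔bot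
  letI : Fintype ((𝓞 L) ⧸ 𝔔) := Fintype.ofFinite _
  have hcardF : Fintype.card ((𝓞 L) ⧸ 𝔔) = q := by
    rw [← Nat.card_eq_fintype_card, ← hq₁, Ideal.absNorm_apply, Submodule.cardQuot_apply]
  have hisq : (Ideal.Quotient.mk 𝔔 i) ^ 2 = -1 := by
    rw [← map_pow, hi, map_neg, map_one]
  have hi4 : i ^ 4 = 1 := by
    rw [show (4 : ℕ) = 2 * 2 from rfl, pow_mul, hi, neg_one_sq]
  have hine : Ideal.Quotient.mk 𝔔 i ≠ 0 := by
    intro h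
    rw [Ideal.Quotient.eq_zero_iff_mem] at h
    apply h𝔔top
    rw [Ideal.eq_top_iff_one, ← hi4]
    exact 𝔔.pow_mem_of_mem h _ (by norm_num)
  have hneg1 : (-1 : (𝓞 L) ⧸ 𝔔) ≠ 1 := by
    intro h
    apply h2𝔔
    rw [← Ideal.Quotient.eq_zero_iff_mem]
    have : ((2 : 𝓞 L) : (𝓞 L)) = (1 : 𝓞 L) + 1 := by norm_num
    rw [this, map_add, map_one]
    linear_combination -h
  have hdvd4 : 4 ∣ q - 1 := by
    have hpow : (Ideal.Quotient.mk 𝔔 i) ^ (q - 1) = 1 := by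
      rw [← hcardF]; exact FiniteField.pow_card_sub_one_eq_one _ hine
    have hord : orderOf (Ideal.Quotient.mk 𝔔 i) = 4 := by
      have hnot : ¬(Ideal.Quotient.mk 𝔔 i) ^ (2 : ℕ) ^ (1 : ℕ) = 1 := by
        rw [pow_one, hisq]; exact hneg1
      have hfin : (Ideal.Quotient.mk 𝔔 i) ^ (2 : ℕ) ^ (1 + 1 : ℕ) = 1 := by
        rw [show ((2:ℕ) ^ (1 + 1 : ℕ)) = 4 from rfl, ← map_pow, hi4, map_one]
      have := orderOf_eq_prime_pow hnot hfin
      rwa [show ((2:ℕ) ^ (1 + 1 : ℕ)) = 4 from rfl] at this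
    rw [← hord]
    exact orderOf_dvd_of_pow_eq_one hpow
  obtain ⟨t, ht⟩ := hdvd4
  have hqt : q = 4 * t + 1 := by omega
  have hm4 : (q - 1) / 4 = t := by omega
  have hm2 : (q - 1) / 2 = 2 * t := by omega
  have ht0 : t ≠ 0 := by omega
  -- β not in 𝔔 when α not in 𝔭
  have hβ𝔔 : ∀ α : 𝓞 K, α ∉ 𝔭 → f α ∉ 𝔔 := by
    intro α hα hmem
    apply hα
    have hletop : Ideal.comap f 𝔔 ≠ ⊤ := by
      intro h
      rw [Ideal.eq_top_iff_one] at h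
      apply h𝔔top
      rw [Ideal.eq_top_iff_one]
      simpa using h
    have hle : 𝔭 ≤ Ideal.comap f 𝔔 := Ideal.map_le_iff_le_comap.mp hle𝔔
    rw [hmax.eq_of_le hletop hle]
    exact hmem
  -- existence of the symbol at 𝔔
  have hexist : ∀ α : 𝓞 K, f α ∉ 𝔔 →
      ∃ ζ : 𝓞 L, ζ ^ 4 = 1 ∧ ζ - (f α) ^ ((Ideal.absNorm 𝔔 - 1) / 4) ∈ 𝔔 := by
    intro α hα
    have hx4 : (Ideal.Quotient.mk 𝔔 ((f α) ^ ((Ideal.absNorm 𝔔 - 1) / 4))) ^ 4 = 1 := by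
      rw [← map_pow, ← pow_mul, hq₁, hm4, show t * 4 = q - 1 from by omega, map_pow,
        ← hcardF]
      exact FiniteField.pow_card_sub_one_eq_one (Ideal.Quotient.mk 𝔔 (f α))
        (by rwa [Ne, Ideal.Quotient.eq_zero_iff_mem])
    have hneg4 : (-1 : 𝓞 L) ^ 4 = 1 := by norm_num
    have hni4 : (-i) ^ 4 = 1 := by
      rw [show (4 : ℕ) = 2 * 2 from rfl, pow_mul, neg_sq, hi, neg_one_sq]
    rcases roots4 hisq hx4 with h | h | h | h
    · exact ⟨1, one_pow 4, Ideal.Quotient.eq.mp (by rw [map_one, h])⟩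
    · exact ⟨-1, hneg4, Ideal.Quotient.eq.mp (by rw [map_neg, map_one, h])⟩
    · exact ⟨i, hi4, Ideal.Quotient.eq.mp h.symm⟩
    · exact ⟨-i, hni4, Ideal.Quotient.eq.mp (by rw [map_neg, h])⟩
  -- main: spec at 𝔔 and transport to 𝔔'
  have hψf : ∀ (x : 𝓞 K), ψ (f x) = f x := fun x => ψ.commutes x
  have main : ∀ α : 𝓞 K, α ∉ 𝔭 →
      (residueSymbol 4 (f α) 𝔔) ^ 4 = 1 ∧
      residueSymbol 4 (f α) 𝔔 - (f α) ^ t ∈ 𝔔 ∧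
      residueSymbol 4 (f α) 𝔔' = ψ (residueSymbol 4 (f α) 𝔔) := by
    intro α hα
    have hβ := hβ𝔔 α hα
    obtain ⟨hs1, hs2⟩ := residueSymbol_spec (hexist α hβ)
    rw [hq₁, hm4] at hs2
    refine ⟨hs1, hs2, ?_⟩
    have hψmem : ψ (residueSymbol 4 (f α) 𝔔) - (f α) ^ t ∈ 𝔔' := by
      have hmm := Ideal.mem_map_of_mem (ψ : 𝓞 L →+* 𝓞 L) hs2
      rw [map_sub, map_pow] at hmm
      rw [h𝔔'def]
      simpa only [RingHom.coe_coe, hψf] using hmm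
    have hψ4 : (ψ (residueSymbol 4 (f α) 𝔔)) ^ 4 = 1 := by
      rw [← map_pow, hs1, map_one]
    have hex' : ∃ ζ : 𝓞 L, ζ ^ 4 = 1 ∧
        ζ - (f α) ^ ((Ideal.absNorm 𝔔' - 1) / 4) ∈ 𝔔' := by
      refine ⟨ψ (residueSymbol 4 (f α) 𝔔), hψ4, ?_⟩
      rwa [hnorm'q, hm4]
    obtain ⟨ht1, ht2⟩ := residueSymbol_spec hex'
    rw [hnorm'q, hm4] at ht2
    refine roots4_unique hi h2𝔔' ht1 hψ4 ?_
    have := 𝔔'.sub_mem ht2 hψmem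
    simpa using this
  constructor
  · -- ψ fixes i
    intro hfix α
    by_cases hα : α ∈ 𝔭
    · have e1 : residueSymbol 4 (f α) 𝔔 = 0 :=
        residueSymbol_eq_zero (hle𝔔 (Ideal.mem_map_of_mem f hα)) h𝔔top
          (by rw [hq₁, hm4]; exact ht0) (by norm_num)
      have e2 : residueSymbol 4 (f α) 𝔔' = 0 :=
        residueSymbol_eq_zero (hle𝔔' (Ideal.mem_map_of_mem f hα)) h𝔔'top
          (by rw [hnorm'q, hm4]; exact ht0) (by norm_num)
      have e3 : residueSymbol 2 α 𝔭 = 0 :=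
        residueSymbol_eq_zero hα h𝔭top
          (by rw [← hqdef, hm2]; omega) (by norm_num)
      rw [e1, e2, e3, map_zero, mul_zero]
    · obtain ⟨hz4, hzmem, hz'⟩ := main α hα
      have hfixroot : ψ (residueSymbol 4 (f α) 𝔔) = residueSymbol 4 (f α) 𝔔 := by
        rcases roots4 hi hz4 with h | h | h | h <;> rw [h] <;>
          simp [hfix]
      rw [hz', hfixroot]
      -- Euler's criterion at 𝔭
      have hα0 : Ideal.Quotient.mk 𝔭 α ≠ 0 := by
        rwa [Ne, Ideal.Quotient.eq_zero_iff_mem]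
      have heuler : ((Ideal.Quotient.mk 𝔭 α) ^ ((q - 1) / 2)) ^ 2 = 1 := by
        rw [← pow_mul, show (q - 1) / 2 * 2 = q - 1 from by omega, ← hcardk]
        exact FiniteField.pow_card_sub_one_eq_one _ hα0
      have hexη : ∃ η : 𝓞 K, η ^ 2 = 1 ∧ η - α ^ ((Ideal.absNorm 𝔭 - 1) / 2) ∈ 𝔭 := by
        have hfact : ((Ideal.Quotient.mk 𝔭 α) ^ ((q - 1) / 2) - 1) *
            ((Ideal.Quotient.mk 𝔭 α) ^ ((q - 1) / 2) + 1) = 0 := by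
          linear_combination heuler
        rcases mul_eq_zero.1 hfact with h | h
        · refine ⟨1, one_pow 2, Ideal.Quotient.eq.mp ?_⟩
          rw [map_one, map_pow, ← hqdef]
          linear_combination -h
        · refine ⟨-1, by norm_num, Ideal.Quotient.eq.mp ?_⟩
          rw [map_neg, map_one, map_pow, ← hqdef]
          linear_combination -h
      obtain ⟨hη1, hη2⟩ := residueSymbol_spec hexη
      rw [← hqdef, hm2] at hη2
      set ζ := residueSymbol 4 (f α) 𝔔 with hζdef
      set η := residueSymbol 2 α 𝔭 with hηdef
      have hzz4 : (ζ * ζ) ^ 4 = 1 := by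
        calc (ζ * ζ) ^ 4 = (ζ ^ 4) ^ 2 := by ring
        _ = 1 := by rw [hz4, one_pow]
      have hfη4 : (f η) ^ 4 = 1 := by
        have h44 : η ^ 4 = (η ^ 2) ^ 2 := by ring
        rw [← map_pow, h44, hη1, one_pow, map_one]
      refine roots4_unique hi h2𝔔 hzz4 hfη4 ?_
      have hXeq : (f α) ^ (2 * t) = ((f α) ^ t) ^ 2 := by
        rw [← pow_mul, mul_comm]
      have d1 : ζ * ζ - (f α) ^ (2 * t) ∈ 𝔔 := by
        have heq : ζ * ζ - (f α) ^ (2 * t) = (ζ - (f α) ^ t) * (ζ + (f α) ^ t) := by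
          rw [hXeq]; ring
        rw [heq]
        exact 𝔔.mul_mem_right _ hzmem
      have d2 : (f α) ^ (2 * t) - f η ∈ 𝔔 := by
        have heq : (f α) ^ (2 * t) - f η = f (α ^ (2 * t) - η) := by
          rw [map_sub, map_pow]
        rw [heq]
        apply hle𝔔
        apply Ideal.mem_map_of_mem
        have := 𝔭.neg_mem hη2
        rwa [neg_sub] at this
      have := 𝔔.add_mem d1 d2
      simpa using this
  · -- ψ does not fix i
    intro hnfix α hα
    obtain ⟨hz4, hzmem, hz'⟩ := main α hα
    rw [hz']
    have hψisq : (ψ i) ^ 2 = -1 := by rw [← map_pow, hi, map_neg, map_one]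
    have hψi : ψ i = -i := by
      have hψi4 : (ψ i) ^ 4 = 1 := by
        rw [show (4 : ℕ) = 2 * 2 from rfl, pow_mul, hψisq, neg_one_sq]
      rcases roots4 hi hψi4 with h | h | h | h
      · rw [h] at hψisq; norm_num at hψisq
      · rw [h] at hψisq; norm_num at hψisq
      · exact absurd h hnfix
      · exact h
    rcases roots4 hi hz4 with h | h | h | h <;> rw [h]
    · simp
    · simp
    · rw [hψi]; linear_combination -hi
    · rw [map_neg, hψi, neg_neg]; linear_combination -hi
end

section
/- For q = 19, the element ε₁₉ = (1/2)(1 + i)(3√19 + 13) is a unit of the ring of integers of M₁₉ = Q(i, √19). -/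
open NumberField Module

open Polynomial in
lemma eps19_integral_aux (K : Type*) [Field K] [CharZero K] (x : K)
    (hx : x ^ 8 + 115598 * x ^ 4 + 1 = 0) : IsIntegral ℤ x := by
  refine ⟨X ^ 8 + C 115598 * X ^ 4 + 1, ?_, ?_⟩
  · monicity!
  · simpa using hx

/-- ε₁₉ = (1/2)(1 + i)(3√19 + 13) is a unit of the ring of integers of
M₁₉ = Q(i, √19). -/
theorem eps19_is_unit (K : Type*) [Field K] [NumberField K]
    (hdim : finrank ℚ K = 4) (i s : K) (hi : i ^ 2 = -1) (hs : s ^ 2 = 19) :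
    ∃ ε : (𝓞 K)ˣ, ((ε : 𝓞 K) : K) = (1 + i) * (3 * s + 13) / 2 := by
  set x : K := (1 + i) * (3 * s + 13) / 2 with hxdef
  set y : K := (1 - i) * (3 * s - 13) / 2 with hydef
  have h2 : (2 : K) ≠ 0 := two_ne_zero
  have hx2 : x ^ 2 = i * (170 + 39 * s) := by
    rw [hxdef, div_pow]
    rw [div_eq_iff (by norm_num)]
    linear_combination (18 * i) * hs + (9 * s ^ 2 + 78 * s + 169) * hi
  have hx4 : x ^ 4 = -(57799 + 13260 * s) := by
    have : x ^ 4 = (x ^ 2) ^ 2 := by ring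
    rw [this, hx2]
    linear_combination (i ^ 2 * 1521) * hs + ((170 + 39 * s) ^ 2 + 28899 - 1521 * s ^ 2) * hi
  have hx8 : x ^ 8 + 115598 * x ^ 4 + 1 = 0 := by
    have : x ^ 8 = (x ^ 4) ^ 2 := by ring
    rw [this, hx4]
    linear_combination (175827600 : K) * hs
  have hy2 : y ^ 2 = -i * (170 - 39 * s) := by
    rw [hydef, div_pow]
    rw [div_eq_iff (by norm_num)]
    linear_combination (-18 * i) * hs + (9 * s ^ 2 - 78 * s + 169) * hi
  have hy4 : y ^ 4 = -(57799 - 13260 * s) := by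
    have : y ^ 4 = (y ^ 2) ^ 2 := by ring
    rw [this, hy2]
    linear_combination (i ^ 2 * 1521) * hs + ((170 - 39 * s) ^ 2 + 28899 - 1521 * s ^ 2) * hi
  have hy8 : y ^ 8 + 115598 * y ^ 4 + 1 = 0 := by
    have : y ^ 8 = (y ^ 4) ^ 2 := by ring
    rw [this, hy4]
    linear_combination (175827600 : K) * hs
  have hxy : x * y = 1 := by
    rw [hxdef, hydef, div_mul_div_comm, div_eq_one_iff_eq (by norm_num)]
    linear_combination (18 : K) * hs + (169 - 9 * s ^ 2) * hi
  have hxint : IsIntegral ℤ x := eps19_integral_aux K x hx8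
  have hyint : IsIntegral ℤ y := eps19_integral_aux K y hy8
  refine ⟨⟨⟨x, hxint⟩, ⟨y, hyint⟩, ?_, ?_⟩, rfl⟩
  · exact RingOfIntegers.ext (by push_cast; exact hxy)
  · exact RingOfIntegers.ext (by push_cast; exact (mul_comm y x).trans hxy)
end
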